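/- Ideal safe screening rule: let u* ∈ Δ be the maximizer of D over Δ. For any index i, if |⟨a_i, u*⟩| < λ, then every minimizer x* of P over ℝ^n satisfies x*(i) = 0. -/
import Mathlib


/-- Euclidean norm of a vector in ℝ^m. -/
noncomputable def norm2 {m : ℕ} (v : Fin m → ℝ) : ℝ := Real.sqrt (∑ i, v i ^ 2)

/-- ℓ1 norm of a vector in ℝ^n. -/
def norm1 {n : ℕ} (x : Fin n → ℝ) : ℝ := ∑ i, |x i|

/-- Canonical inner product on ℝ^m. -/
def dot {m : ℕ} (a u : Fin m → ℝ) : ℝ := ∑ i, a i * u i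

/-- Lasso primal objective P(x) = (1/2)‖y − Ax‖₂² + λ‖x‖₁. -/
noncomputable def Pobj {m n : ℕ} (A : Matrix (Fin m) (Fin n) ℝ) (y : Fin m → ℝ)
    (lam : ℝ) (x : Fin n → ℝ) : ℝ :=
  (1 / 2) * norm2 (y - A.mulVec x) ^ 2 + lam * norm1 x

/-- Lasso dual objective D(u) = (1/2)‖y‖₂² − (1/2)‖y − u‖₂². -/
noncomputable def Dobj {m : ℕ} (y u : Fin m → ℝ) : ℝ :=
  (1 / 2) * norm2 y ^ 2 - (1 / 2) * norm2 (y - u) ^ 2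

/-- Dual feasibility: u ∈ Δ iff |⟨a_i, u⟩| ≤ λ for every column a_i of A. -/
def feas {m n : ℕ} (A : Matrix (Fin m) (Fin n) ℝ) (lam : ℝ) (u : Fin m → ℝ) : Prop :=
  ∀ i : Fin n, |dot (fun j => A j i) u| ≤ lam

lemma norm2_sq {m : ℕ} (v : Fin m → ℝ) : norm2 v ^ 2 = ∑ i, v i ^ 2 := by
  rw [norm2, Real.sq_sqrt]; positivity

lemma perturb {m n : ℕ} (A : Matrix (Fin m) (Fin n) ℝ) (y : Fin m → ℝ) (lam : ℝ)
    (xstar : Fin n → ℝ) (hx : ∀ x : Fin n → ℝ, Pobj A y lam xstar ≤ Pobj A y lam x)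
    (j : Fin n) (t : ℝ) :
    0 ≤ -(t * (∑ k, A k j * (y k - A.mulVec xstar k)))
      + t ^ 2 / 2 * (∑ k, A k j ^ 2)
      + lam * (|xstar j + t| - |xstar j|) := by
  have h := hx (fun l => xstar l + if l = j then t else 0)
  have hmv : ∀ k, A.mulVec (fun l => xstar l + if l = j then t else 0) k
      = A.mulVec xstar k + A k j * t := by
    intro k
    simp only [Matrix.mulVec, dotProduct, mul_add, Finset.sum_add_distrib, mul_ite,
      mul_zero, Finset.sum_ite_eq', Finset.mem_univ, if_true]
  have hn1 : norm1 (fun l => xstar l + if l = j then t else 0)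
      = norm1 xstar + (|xstar j + t| - |xstar j|) := by
    unfold norm1
    have : ∀ l : Fin n, |xstar l + if l = j then t else 0|
        = |xstar l| + (if l = j then |xstar j + t| - |xstar j| else 0) := by
      intro l; by_cases hl : l = j <;> simp [hl]
    simp only [this, Finset.sum_add_distrib]
    rw [Finset.sum_ite_eq' Finset.univ j (fun _ => |xstar j + t| - |xstar j|)]
    simp
  rw [Pobj, Pobj, norm2_sq, norm2_sq, hn1] at h
  have hsq : (∑ k, ((y - A.mulVec (fun l => xstar l + if l = j then t else 0)) k) ^ 2)
      = (∑ k, ((y - A.mulVec xstar) k) ^ 2) - 2 * (t * ∑ k, A k j * (y k - A.mulVec xstar k))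
        + t ^ 2 * (∑ k, A k j ^ 2) := by
    simp only [Pi.sub_apply, hmv]
    rw [Finset.mul_sum, Finset.mul_sum, Finset.mul_sum, ← Finset.sum_sub_distrib,
      ← Finset.sum_add_distrib]
    exact Finset.sum_congr rfl fun k _ => by ring
  rw [hsq] at h
  linarith

/-- ideal safe screening rule: if |⟨a_i, u*⟩| < λ at the dual maximizer u*,
then every Lasso minimizer x* satisfies x*(i) = 0. -/
theorem lasso_ideal_screening (m n : ℕ) (hm : 0 < m) (hn : 0 < n)
    (A : Matrix (Fin m) (Fin n) ℝ) (y : Fin m → ℝ) (lam : ℝ) (hlam : 0 < lam)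
    (ustar : Fin m → ℝ) (hfeas : feas A lam ustar)
    (hmax : ∀ u : Fin m → ℝ, feas A lam u → Dobj y u ≤ Dobj y ustar)
    (i : Fin n) (hi : |dot (fun j => A j i) ustar| < lam)
    (xstar : Fin n → ℝ) (hx : ∀ x : Fin n → ℝ, Pobj A y lam xstar ≤ Pobj A y lam x) :
    xstar i = 0 := by
  set r : Fin m → ℝ := fun k => y k - A.mulVec xstar k with hr
  set c : Fin n → ℝ := fun j => ∑ k, A k j * r k with hc
  set S : Fin n → ℝ := fun j => ∑ k, A k j ^ 2 with hS
  have hSnn : ∀ j, 0 ≤ S j := fun j => Finset.sum_nonneg fun k _ => sq_nonneg _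
  have hpert : ∀ (j : Fin n) (t : ℝ),
      0 ≤ -(t * c j) + t ^ 2 / 2 * S j + lam * (|xstar j + t| - |xstar j|) :=
    fun j t => perturb A y lam xstar hx j t
  -- step: choice of epsilon bound
  have heps : ∀ (j : Fin n) (δ : ℝ), 0 < δ → (2 * δ / (S j + 1)) / 2 * S j ≤ δ := by
    intro j δ hδ
    have h1 : (0:ℝ) < S j + 1 := by linarith [hSnn j]
    rw [div_div, div_mul_eq_mul_div, div_le_iff₀ (by positivity)]
    nlinarith [hSnn j]
  -- feasibility of r
  have hfr : ∀ j, |c j| ≤ lam := by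
    intro j
    apply le_of_forall_pos_le_add
    intro δ hδ
    set ε : ℝ := 2 * δ / (S j + 1) with hε
    have hεpos : 0 < ε := by
      apply div_pos (by linarith) (by linarith [hSnn j])
    have habs1 : |xstar j + ε| - |xstar j| ≤ ε := by
      have := abs_add_le (xstar j) ε
      rw [abs_of_pos hεpos] at this; linarith
    have habs2 : |xstar j + (-ε)| - |xstar j| ≤ ε := by
      have h := abs_add_le (xstar j) (-ε)
      rw [abs_neg, abs_of_pos hεpos] at h
      linarith
    have h1 := hpert j ε
    have h2 := hpert j (-ε)
    have hb := heps j δ hδ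
    rw [← hε] at hb
    rw [abs_le]
    constructor
    · nlinarith
    · nlinarith
  -- KKT
  have hkkt : ∀ j, xstar j * c j = lam * |xstar j| := by
    intro j
    by_cases hz : xstar j = 0
    · simp [hz]
    · set s : ℝ := if 0 < xstar j then 1 else -1 with hs
      have hxs : xstar j = |xstar j| * s := by
        rcases lt_trichotomy (xstar j) 0 with h | h | h
        · rw [hs, if_neg (by linarith), abs_of_neg h]; ring
        · exact absurd h hz
        · rw [hs, if_pos h, abs_of_pos h]; ring
      have hxpos : 0 < |xstar j| := abs_pos.mpr hz
      have hlb : lam ≤ s * c j := by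
        apply le_of_forall_pos_le_add
        intro δ hδ
        set ε : ℝ := min (|xstar j| / 2) (2 * δ / (S j + 1)) with hε
        have hεpos : 0 < ε := lt_min (by linarith)
          (div_pos (by linarith) (by linarith [hSnn j]))
        have hεlt : ε < |xstar j| := lt_of_le_of_lt (min_le_left _ _) (by linarith)
        have habs : |xstar j + (-(s * ε))| = |xstar j| - ε := by
          rcases lt_trichotomy (xstar j) 0 with h | h | h
          · rw [hs, if_neg (by linarith)]
            rw [abs_of_neg h] at hεlt ⊢
            rw [abs_of_neg (by linarith : xstar j + -(-1 * ε) < 0)]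
            ring
          · exact absurd h hz
          · rw [hs, if_pos h]
            rw [abs_of_pos h] at hεlt ⊢
            rw [abs_of_pos (by linarith : (0:ℝ) < xstar j + -(1 * ε))]
            ring
        have h1 := hpert j (-(s * ε))
        rw [habs] at h1
        have hb : ε / 2 * S j ≤ δ := by
          have h2 : ε ≤ 2 * δ / (S j + 1) := min_le_right _ _
          have h3 := heps j δ hδ
          have h4 : ε / 2 * S j ≤ (2 * δ / (S j + 1)) / 2 * S j := by
            apply mul_le_mul_of_nonneg_right _ (hSnn j)
            linarith
          linarith
        have hsq : (-(s * ε)) ^ 2 = ε ^ 2 := by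
          have hs1 : s = 1 ∨ s = -1 := by by_cases h : 0 < xstar j <;> simp [hs, h]
          rcases hs1 with h | h <;> rw [h] <;> ring
        rw [hsq] at h1
        nlinarith [h1, hb, hεpos, mul_nonneg (sub_nonneg.mpr hb) hεpos.le]
      have hub : s * c j ≤ lam := by
        have h1 := hfr j
        rcases (by by_cases h : 0 < xstar j <;> simp [hs, h] : s = 1 ∨ s = -1) with h | h <;>
          rw [h] <;> cases abs_le.mp h1 <;> linarith
      have hsc : s * c j = lam := le_antisymm hub hlb
      linear_combination |xstar j| * hsc + c j * hxs
  -- swap lemma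
  have hswap : ∀ u : Fin m → ℝ, ∑ j, xstar j * (∑ k, A k j * u k)
      = ∑ k, A.mulVec xstar k * u k := by
    intro u
    simp only [Finset.mul_sum, Matrix.mulVec, dotProduct, Finset.sum_mul]
    rw [Finset.sum_comm]
    exact Finset.sum_congr rfl fun k _ => Finset.sum_congr rfl fun j _ => by ring
  -- strong duality at r
  have hsum_kkt : lam * norm1 xstar = ∑ j, xstar j * c j := by
    rw [norm1, Finset.mul_sum]
    exact Finset.sum_congr rfl fun j _ => (hkkt j).symm
  have hstrong : Dobj y r = Pobj A y lam xstar := by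
    rw [Dobj, Pobj, norm2_sq, norm2_sq, norm2_sq, hsum_kkt, hc]
    rw [hswap r]
    simp only [Pi.sub_apply, hr]
    rw [Finset.mul_sum, Finset.mul_sum, Finset.mul_sum, ← Finset.sum_sub_distrib,
      ← Finset.sum_add_distrib]
    exact Finset.sum_congr rfl fun k _ => by ring
  -- r is feasible
  have hfeasr : feas A lam r := by
    intro j
    have := hfr j
    simpa [dot, hc] using this
  -- duality gap bound
  have hgap : (1/2) * (∑ k, (r k - ustar k) ^ 2) ≤ Pobj A y lam xstar - Dobj y ustar := by
    have hbound : ∑ j, xstar j * (∑ k, A k j * ustar k) ≤ lam * norm1 xstar := by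
      rw [norm1, Finset.mul_sum]
      apply Finset.sum_le_sum
      intro j _
      calc xstar j * (∑ k, A k j * ustar k) ≤ |xstar j * (∑ k, A k j * ustar k)| :=
            le_abs_self _
        _ = |xstar j| * |∑ k, A k j * ustar k| := abs_mul _ _
        _ ≤ |xstar j| * lam := by
            apply mul_le_mul_of_nonneg_left _ (abs_nonneg _)
            simpa [dot] using hfeas j
        _ = lam * |xstar j| := mul_comm _ _
    have e1 : Pobj A y lam xstar - Dobj y ustar
        = (1/2) * (∑ k, (r k - ustar k) ^ 2)
          + (lam * norm1 xstar - ∑ j, xstar j * (∑ k, A k j * ustar k)) := by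
      rw [Pobj, Dobj, norm2_sq, norm2_sq, norm2_sq]
      rw [show (∑ j, xstar j * (∑ k, A k j * ustar k))
          = ∑ k, A.mulVec xstar k * ustar k from hswap ustar]
      have key : ∑ k, ((1/2) * ((y k - A.mulVec xstar k) ^ 2)
          - (1/2) * (y k ^ 2) + (1/2) * ((y k - ustar k) ^ 2)
          - (1/2) * ((r k - ustar k) ^ 2) + A.mulVec xstar k * ustar k) = 0 :=
        Finset.sum_eq_zero fun k _ => by simp only [hr]; ring
      simp only [Finset.sum_add_distrib, Finset.sum_sub_distrib, ← Finset.mul_sum] at key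
      simp only [Pi.sub_apply, hr]
      linarith [key]
    linarith [e1, hbound]
  -- conclude
  have hDle := hmax r hfeasr
  rw [hstrong] at hDle
  have hsum0 : ∑ k, (r k - ustar k) ^ 2 ≤ 0 := by linarith
  have hzero : ∀ k, r k = ustar k := by
    intro k
    have h := (Finset.sum_eq_zero_iff_of_nonneg (fun k _ => sq_nonneg (r k - ustar k))).mp
      (le_antisymm hsum0 (Finset.sum_nonneg fun k _ => sq_nonneg _)) k (Finset.mem_univ k)
    have := pow_eq_zero_iff (n := 2) (by norm_num) |>.mp h
    linarith [this]
  have hci : c i = dot (fun j => A j i) ustar := by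
    rw [hc, dot]
    exact Finset.sum_congr rfl fun k _ => by rw [hzero k]
  by_contra h0
  have hxpos : 0 < |xstar i| := abs_pos.mpr h0
  have hk := hkkt i
  rw [hci] at hk
  have h1 : xstar i * dot (fun j => A j i) ustar
      ≤ |xstar i| * |dot (fun j => A j i) ustar| := by
    calc xstar i * dot (fun j => A j i) ustar ≤ |xstar i * dot (fun j => A j i) ustar| :=
          le_abs_self _
      _ = _ := abs_mul _ _
  nlinarith [hi, hxpos]
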